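/- Let I be an open real interval, α ∈ ℝ, and let w : [0,1] × I → ℝ be C². Then for all t ∈ I: ∫₀¹ w_tt(x,t)(x w_x(x,t) − α w(x,t)) dx = d/dt ∫₀¹ w_t(x,t)(x w_x(x,t) − α w(x,t)) dx + (½+α)∫₀¹ w_t(x,t)² dx − ½ w_t(1,t)². -/

import Mathlib

open Real Set

/-- `w_t`: partial derivative of `w` in time. -/
noncomputable def pt (w : ℝ → ℝ → ℝ) (x t : ℝ) : ℝ := deriv (fun s => w x s) t

/-- `w_x`: partial derivative of `w` in space. -/
noncomputable def px (w : ℝ → ℝ → ℝ) (x t : ℝ) : ℝ := deriv (fun y => w y t) x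

/-- `w_tt`. -/
noncomputable def ptt (w : ℝ → ℝ → ℝ) (x t : ℝ) : ℝ := deriv (fun s => pt w x s) t

/-- `w_xt`: spatial derivative of `w_t`. -/
noncomputable def pxt (w : ℝ → ℝ → ℝ) (x t : ℝ) : ℝ := deriv (fun y => pt w y t) x

/-- `w_xx`. -/
noncomputable def pxx (w : ℝ → ℝ → ℝ) (x t : ℝ) : ℝ := deriv (fun y => px w y t) x

/-- `w_xxx`. -/
noncomputable def pxxx (w : ℝ → ℝ → ℝ) (x t : ℝ) : ℝ := deriv (fun y => pxx w y t) x

/-- `w_xxxx`. -/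
noncomputable def pxxxx (w : ℝ → ℝ → ℝ) (x t : ℝ) : ℝ := deriv (fun y => pxxx w y t) x

/-- `w_xtt`: time derivative of `w_xt`. -/
noncomputable def pxtt (w : ℝ → ℝ → ℝ) (x t : ℝ) : ℝ := deriv (fun s => pxt w x s) t

/-- `w_xxtt`: second spatial derivative of `w_tt`. -/
noncomputable def pxxtt (w : ℝ → ℝ → ℝ) (x t : ℝ) : ℝ :=
  deriv (fun y => deriv (fun z => ptt w z t) y) x

/-- The energy E(t) = ½∫₀¹ w_t² + ½∫₀¹ w_xx² + ½∫₀¹ w_xt² dx. -/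
noncomputable def energy (w : ℝ → ℝ → ℝ) (t : ℝ) : ℝ :=
  (1/2) * (∫ x in (0:ℝ)..1, (pt w x t) ^ 2)
    + (1/2) * (∫ x in (0:ℝ)..1, (pxx w x t) ^ 2)
    + (1/2) * (∫ x in (0:ℝ)..1, (pxt w x t) ^ 2)

/-- The auxiliary functional ϱ(t) = ∫₀¹ ( w_t(x w_x − α w) + w_xt[(1−α)w_x + x w_xx] ) dx. -/
noncomputable def rhoFun (w : ℝ → ℝ → ℝ) (α : ℝ) (t : ℝ) : ℝ :=
  ∫ x in (0:ℝ)..1,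
    (pt w x t * (x * px w x t - α * w x t)
      + pxt w x t * ((1 - α) * px w x t + x * pxx w x t))

lemma hasDerivAt_fix_fst {E : Type*} [NormedAddCommGroup E] [NormedSpace ℝ E]
    {g : ℝ × ℝ → E} {g' : ℝ × ℝ →L[ℝ] E} {x t : ℝ} (h : HasFDerivAt g g' (x, t)) :
    HasDerivAt (fun s => g (x, s)) (g' (0, 1)) t := by
  have h1 : HasDerivAt (fun s : ℝ => ((x, s) : ℝ × ℝ)) (0, 1) t :=
    (hasDerivAt_const t x).prodMk (hasDerivAt_id t)
  exact h.comp_hasDerivAt t h1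

lemma hasDerivAt_fix_snd {E : Type*} [NormedAddCommGroup E] [NormedSpace ℝ E]
    {g : ℝ × ℝ → E} {g' : ℝ × ℝ →L[ℝ] E} {x t : ℝ} (h : HasFDerivAt g g' (x, t)) :
    HasDerivAt (fun y => g (y, t)) (g' (1, 0)) x := by
  have h1 : HasDerivAt (fun y : ℝ => ((y, t) : ℝ × ℝ)) (1, 0) x :=
    (hasDerivAt_id x).prodMk (hasDerivAt_const x t)
  exact h.comp_hasDerivAt x h1

lemma key_integral (α : ℝ) {g g' : ℝ → ℝ} (hg : ∀ x, HasDerivAt g (g' x) x)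
    (hcg : Continuous g) (hcg' : Continuous g') :
    (∫ x in (0:ℝ)..1, g x * (x * g' x - α * g x))
      = 1/2 * (g 1)^2 - (1/2 + α) * ∫ x in (0:ℝ)..1, (g x)^2 := by
  have hv : ∀ x ∈ uIcc (0:ℝ) 1, HasDerivAt (fun y => g y ^ 2) (2 * g x * g' x) x := by
    intro x _; simpa using (hg x).fun_pow 2
  have hibp := intervalIntegral.integral_mul_deriv_eq_deriv_mul (a := (0:ℝ)) (b := 1)
    (u := fun x : ℝ => x) (v := fun x => g x ^ 2) (u' := fun _ => (1:ℝ))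
    (v' := fun x => 2 * g x * g' x)
    (fun x _ => hasDerivAt_id x) hv intervalIntegrable_const
    (((continuous_const.mul hcg).mul hcg').intervalIntegrable 0 1)
  have h1 : (∫ x in (0:ℝ)..1, g x * (x * g' x - α * g x))
      = ∫ x in (0:ℝ)..1, (1/2 * (x * (2 * g x * g' x)) - α * g x ^ 2) :=
    intervalIntegral.integral_congr (fun x _ => by ring)
  have hI1 : IntervalIntegrable (fun x => 1/2 * (x * (2 * g x * g' x)))
      MeasureTheory.volume 0 1 :=
    (continuous_const.mul (continuous_id.mul
      ((continuous_const.mul hcg).mul hcg'))).intervalIntegrable 0 1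
  have hI2 : IntervalIntegrable (fun x => α * g x ^ 2) MeasureTheory.volume 0 1 :=
    (continuous_const.mul (hcg.pow 2)).intervalIntegrable 0 1
  rw [h1, intervalIntegral.integral_sub hI1 hI2, intervalIntegral.integral_const_mul,
    intervalIntegral.integral_const_mul, hibp]
  simp only [one_mul, zero_mul]
  ring

set_option maxHeartbeats 1000000 in

/-- Integration-by-parts identity for 𝒩₁ = ∫₀¹ w_tt (x w_x − α w) dx:
𝒩₁ = d/dt ∫₀¹ w_t (x w_x − α w) dx + (½+α)∫₀¹ w_t² dx − ½ w_t(1,t)². -/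
theorem stmt_7 (a b α : ℝ) (w : ℝ → ℝ → ℝ)
    (hw : ContDiff ℝ 2 (Function.uncurry w)) :
    ∀ t ∈ Set.Ioo a b,
      (∫ x in (0:ℝ)..1, ptt w x t * (x * px w x t - α * w x t))
        = deriv (fun s => ∫ x in (0:ℝ)..1, pt w x s * (x * px w x s - α * w x s)) t
          + (1/2 + α) * (∫ x in (0:ℝ)..1, (pt w x t) ^ 2)
          - (1/2) * (pt w 1 t) ^ 2 := by
  intro t _
  set W := Function.uncurry w with hWdef
  have hWe : ∀ x t, w x t = W (x, t) := fun _ _ => rfl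
  have hdW : Differentiable ℝ W := (hw.of_le one_le_two).differentiable one_ne_zero
  set f' := fderiv ℝ W with hf'def
  have hf'C : ContDiff ℝ 1 f' := hw.fderiv_right (le_refl 2)
  have hdf' : Differentiable ℝ f' := hf'C.differentiable one_ne_zero
  set f'' := fderiv ℝ f' with hf''def
  have hf''c : Continuous f'' := hf'C.continuous_fderiv one_ne_zero
  -- first derivatives
  have hpt : ∀ x t, HasDerivAt (fun s => w x s) (f' (x, t) (0, 1)) t :=
    fun x t => hasDerivAt_fix_fst (hdW (x, t)).hasFDerivAt
  have hpx : ∀ x t, HasDerivAt (fun y => w y t) (f' (x, t) (1, 0)) x :=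
    fun x t => hasDerivAt_fix_snd (hdW (x, t)).hasFDerivAt
  have hpt_eq : ∀ x t, pt w x t = f' (x, t) (0, 1) := fun x t => by
    simp only [pt]; exact (hpt x t).deriv
  have hpx_eq : ∀ x t, px w x t = f' (x, t) (1, 0) := fun x t => by
    simp only [px]; exact (hpx x t).deriv
  -- second derivatives
  have hDt : ∀ (v : ℝ × ℝ) x t, HasDerivAt (fun s => f' (x, s) v) (f'' (x, t) (0, 1) v) t := by
    intro v x t
    have h := hasDerivAt_fix_fst (hdf' (x, t)).hasFDerivAt
    simpa using h.clm_apply (hasDerivAt_const t v)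
  have hDx : ∀ (v : ℝ × ℝ) x t, HasDerivAt (fun y => f' (y, t) v) (f'' (x, t) (1, 0) v) x := by
    intro v x t
    have h := hasDerivAt_fix_snd (hdf' (x, t)).hasFDerivAt
    simpa using h.clm_apply (hasDerivAt_const x v)
  have hPtt : ∀ x t, HasDerivAt (fun s => pt w x s) (f'' (x, t) (0, 1) (0, 1)) t := by
    intro x t
    have he : (fun s => pt w x s) = fun s => f' (x, s) (0, 1) := funext fun s => hpt_eq x s
    rw [he]; exact hDt _ x t
  have hptt_eq : ∀ x t, ptt w x t = f'' (x, t) (0, 1) (0, 1) := fun x t => by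
    simp only [ptt]; exact (hPtt x t).deriv
  have hsymm : ∀ p : ℝ × ℝ, f'' p (0, 1) (1, 0) = f'' p (1, 0) (0, 1) := fun p =>
    second_derivative_symmetric (fun y => (hdW y).hasFDerivAt) ((hdf' p).hasFDerivAt) _ _
  -- continuity
  have cW : Continuous W := hw.continuous
  have cf' : ∀ v : ℝ × ℝ, Continuous (fun p : ℝ × ℝ => f' p v) := fun v =>
    hf'C.continuous.clm_apply continuous_const
  have cf'' : ∀ u v : ℝ × ℝ, Continuous (fun p : ℝ × ℝ => f'' p u v) := fun u v =>
    (hf''c.clm_apply continuous_const).clm_apply continuous_const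
  have cx : ∀ s : ℝ, Continuous (fun x : ℝ => ((x, s) : ℝ × ℝ)) := fun s =>
    continuous_id.prodMk continuous_const
  -- the integrand and its time derivative as functions on the plane
  set Ψ : ℝ × ℝ → ℝ := fun p => f' p (0, 1) * (p.1 * f' p (1, 0) - α * W p) with hΨ
  set Φ : ℝ × ℝ → ℝ := fun p =>
      f'' p (0, 1) (0, 1) * (p.1 * f' p (1, 0) - α * W p)
        + f' p (0, 1) * (p.1 * f'' p (0, 1) (1, 0) - α * f' p (0, 1)) with hΦ
  have cΨ : Continuous Ψ := by
    rw [hΨ]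
    exact (cf' _).mul ((continuous_fst.mul (cf' _)).sub (continuous_const.mul cW))
  have cΦ : Continuous Φ := by
    rw [hΦ]
    exact ((cf'' _ _).mul ((continuous_fst.mul (cf' _)).sub (continuous_const.mul cW))).add
      ((cf' _).mul ((continuous_fst.mul (cf'' _ _)).sub (continuous_const.mul (cf' _))))
  have hF_eq : ∀ s x : ℝ, pt w x s * (x * px w x s - α * w x s) = Ψ (x, s) := by
    intro s x
    rw [hpt_eq, hpx_eq, hΨ]
    rfl
  have hdiff : ∀ x s : ℝ,
      HasDerivAt (fun s' => pt w x s' * (x * px w x s' - α * w x s')) (Φ (x, s)) s := by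
    intro x s
    have he : (fun s' => pt w x s' * (x * px w x s' - α * w x s'))
        = fun s' => f' (x, s') (0, 1) * (x * f' (x, s') (1, 0) - α * W (x, s')) := by
      funext s'; rw [hpt_eq, hpx_eq, hWe]
    rw [he]
    have hA := hDt (0, 1) x s
    have hB : HasDerivAt (fun s' => x * f' (x, s') (1, 0) - α * W (x, s'))
        (x * f'' (x, s) (0, 1) (1, 0) - α * f' (x, s) (0, 1)) s :=
      ((hDt (1, 0) x s).const_mul x).sub
        ((hasDerivAt_fix_fst (hdW (x, s)).hasFDerivAt).const_mul α)
    simpa [hΦ] using hA.fun_mul hB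
  -- bound on the derivative
  obtain ⟨C, hC⟩ := (isCompact_Icc.prod isCompact_Icc :
      IsCompact (Icc (0:ℝ) 1 ×ˢ Icc (t-1) (t+1))).exists_bound_of_continuousOn cΦ.continuousOn
  -- differentiation under the integral sign
  have key := intervalIntegral.hasDerivAt_integral_of_dominated_loc_of_deriv_le
    (μ := MeasureTheory.volume) (a := (0:ℝ)) (b := (1:ℝ))
    (F := fun s x => pt w x s * (x * px w x s - α * w x s))
    (F' := fun s x => Φ (x, s)) (x₀ := t) (bound := fun _ => C) (s := Metric.ball t 1) (Metric.ball_mem_nhds t one_pos)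
    (Filter.Eventually.of_forall fun s => by
      have he : (fun x => pt w x s * (x * px w x s - α * w x s)) = fun x => Ψ (x, s) :=
        funext fun x => hF_eq s x
      have hm : MeasureTheory.AEStronglyMeasurable (fun x => Ψ (x, s))
          (MeasureTheory.volume.restrict (uIoc (0:ℝ) 1)) :=
        (cΨ.comp (cx s)).aestronglyMeasurable
      rwa [← he] at hm)
    (by
      have he : (fun x => pt w x t * (x * px w x t - α * w x t)) = fun x => Ψ (x, t) :=
        funext fun x => hF_eq t x
      have hm : IntervalIntegrable (fun x => Ψ (x, t)) MeasureTheory.volume 0 1 :=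
        (cΨ.comp (cx t)).intervalIntegrable 0 1
      rwa [← he] at hm)
    ((cΦ.comp (cx t)).aestronglyMeasurable)
    (MeasureTheory.ae_of_all _ fun x hx s hs => by
      rw [Set.uIoc_of_le (by norm_num : (0:ℝ) ≤ 1)] at hx
      have hs' : s ∈ Icc (t-1) (t+1) := by
        have := Real.ball_eq_Ioo t 1 ▸ hs
        exact Ioo_subset_Icc_self this
      exact hC (x, s) (Set.mk_mem_prod ⟨hx.1.le, hx.2⟩ hs'))
    (intervalIntegrable_const)
    (MeasureTheory.ae_of_all _ fun x hx s hs => hdiff x s)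
  rw [key.2.deriv]
  -- rewrite everything in terms of f', f''
  simp only [hptt_eq, hpx_eq, hpt_eq, hWe, hΦ]
  simp only [hsymm]
  -- integrability of the pieces
  have iA : IntervalIntegrable
      (fun x => f'' (x, t) (0, 1) (0, 1) * (x * f' (x, t) (1, 0) - α * W (x, t)))
      MeasureTheory.volume 0 1 :=
    (((cf'' _ _).comp (cx t)).mul ((continuous_id.mul ((cf' _).comp (cx t))).sub
      (continuous_const.mul (cW.comp (cx t))))).intervalIntegrable 0 1
  have iB : IntervalIntegrable
      (fun x => f' (x, t) (0, 1) * (x * f'' (x, t) (1, 0) (0, 1) - α * f' (x, t) (0, 1)))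
      MeasureTheory.volume 0 1 :=
    (((cf' _).comp (cx t)).mul ((continuous_id.mul ((cf'' _ _).comp (cx t))).sub
      (continuous_const.mul ((cf' _).comp (cx t))))).intervalIntegrable 0 1
  -- split the derivative integral
  have hsplit : (∫ x in (0:ℝ)..1,
        (f'' (x, t) (0, 1) (0, 1) * (x * f' (x, t) (1, 0) - α * W (x, t))
          + f' (x, t) (0, 1) * (x * f'' (x, t) (1, 0) (0, 1) - α * f' (x, t) (0, 1))))
      = (∫ x in (0:ℝ)..1, f'' (x, t) (0, 1) (0, 1) * (x * f' (x, t) (1, 0) - α * W (x, t)))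
        + ∫ x in (0:ℝ)..1, f' (x, t) (0, 1) * (x * f'' (x, t) (1, 0) (0, 1) - α * f' (x, t) (0, 1)) :=
    intervalIntegral.integral_add iA iB
  have hkeyB := key_integral α (g := fun x => f' (x, t) (0, 1))
      (g' := fun x => f'' (x, t) (1, 0) (0, 1))
      (fun x => hDx (0, 1) x t) ((cf' _).comp (cx t)) ((cf'' _ _).comp (cx t))
  rw [hsplit, hkeyB]
  ring
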